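/- Let A be a unital ℂ-algebra with derivation-comultiplication ∂ and X ∈ A with ∂X = 1 ⊗ 1. If n_{ij} ∈ ker ∂ are such that β = (n_{ij} - Xδ_{ij}) is invertible in Mₙ(A), then α = β⁻¹ is a corepresentation of (A, ∂), i.e. ∂α_{ij} = Σₖ α_{ik} ⊗ α_{kj}. -/
import Mathlib


open TensorProduct

variable {A : Type*} [Ring A] [Algebra ℂ A]

/-- `d : A → A ⊗ A` is a derivation for the natural `A`-bimodule structure on `A ⊗ A`,
i.e. `d(ab) = a·d(b) + d(a)·b` where `a·(x⊗y) = ax⊗y` and `(x⊗y)·b = x⊗yb`. -/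
def IsTensorDerivation (d : A →ₗ[ℂ] A ⊗[ℂ] A) : Prop :=
  ∀ a b : A, d (a * b) =
    LinearMap.rTensor A (LinearMap.mulLeft ℂ a) (d b) +
    LinearMap.lTensor A (LinearMap.mulRight ℂ b) (d a)

/-- `d` is a coassociative comultiplication. -/
def IsCoassociative (d : A →ₗ[ℂ] A ⊗[ℂ] A) : Prop :=
  ∀ a : A, TensorProduct.assoc ℂ A A A (LinearMap.rTensor A d (d a)) =
    LinearMap.lTensor A d (d a)

/-- `α` is a corepresentation of `(A, d)`: `d a_{ij} = Σₖ a_{ik} ⊗ a_{kj}`. -/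
def IsCorepresentation {n : ℕ} (d : A →ₗ[ℂ] A ⊗[ℂ] A)
    (α : Matrix (Fin n) (Fin n) A) : Prop :=
  ∀ i j : Fin n, d (α i j) = ∑ k : Fin n, α i k ⊗ₜ[ℂ] α k j

/-- If `d` is a coassociative derivation-comultiplication on a unital `ℂ`-algebra `A`,
`X ∈ A` satisfies `dX = 1 ⊗ 1`, and `n_{ij} ∈ ker d` are such that
`β = (n_{ij} - X δ_{ij})` is invertible in `Mₙ(A)`, then `α = β⁻¹` is a corepresentation
of `(A, d)`. -/
theorem inverse_is_corepresentation {n : ℕ} (d : A →ₗ[ℂ] A ⊗[ℂ] A)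
    (hder : IsTensorDerivation d) (hco : IsCoassociative d)
    (X : A) (hX : d X = (1 : A) ⊗ₜ[ℂ] (1 : A))
    (N : Matrix (Fin n) (Fin n) A) (hN : ∀ i j, d (N i j) = 0)
    (β : Matrix (Fin n) (Fin n) A)
    (hβ : ∀ i j, β i j = N i j - (if i = j then X else 0))
    (hinv : IsUnit β) :
    IsCorepresentation d (Ring.inverse β) := by

  classical
  set α := Ring.inverse β with hα
  have hαβ : α * β = 1 := Ring.inverse_mul_cancel β hinv
  have hβα : β * α = 1 := Ring.mul_inverse_cancel β hinv
  -- d 1 = 0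
  have hd1 : d (1 : A) = 0 := by
    have := hder 1 1
    simp only [mul_one, LinearMap.mulLeft_one, LinearMap.mulRight_one,
      LinearMap.rTensor_id, LinearMap.lTensor_id, LinearMap.id_coe, id_eq] at this
    exact add_eq_left.mp this.symm
  -- d β
  have hdβ : ∀ i j, d (β i j) = -(if i = j then (1:A) ⊗ₜ[ℂ] (1:A) else 0) := by
    intro i j
    rw [hβ i j, map_sub, hN]
    by_cases h : i = j <;> simp [h, hX]
  -- helper: lTensor of mulRight of a sum
  have hsum : ∀ (f : Fin n → A) (x : A ⊗[ℂ] A),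
      LinearMap.lTensor A (LinearMap.mulRight ℂ (∑ j, f j)) x
        = ∑ j, LinearMap.lTensor A (LinearMap.mulRight ℂ (f j)) x := by
    intro f x
    have h1 : LinearMap.mulRight ℂ (∑ j, f j) = ∑ j, LinearMap.mulRight ℂ (f j) := by
      ext a; simp [Finset.mul_sum]
    rw [h1, show LinearMap.lTensor A (∑ j, LinearMap.mulRight ℂ (f j))
        = ∑ j, LinearMap.lTensor A (LinearMap.mulRight ℂ (f j)) from
      map_sum (LinearMap.lTensorHom A) _ Finset.univ, LinearMap.sum_apply]
  -- key equation: Σₖ (d α_{ik})·β_{kj} = α_{ij} ⊗ 1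
  have key : ∀ i j, (∑ k, LinearMap.lTensor A (LinearMap.mulRight ℂ (β k j)) (d (α i k)))
      = α i j ⊗ₜ[ℂ] (1 : A) := by
    intro i j
    have h1 : d ((α * β) i j) = d ((1 : Matrix (Fin n) (Fin n) A) i j) := by rw [hαβ]
    rw [Matrix.mul_apply, map_sum] at h1
    have h2 : d ((1 : Matrix (Fin n) (Fin n) A) i j) = 0 := by
      by_cases h : i = j <;> simp [Matrix.one_apply, h, hd1]
    rw [h2] at h1
    have h3 : ∀ k, d (α i k * β k j) =
        LinearMap.rTensor A (LinearMap.mulLeft ℂ (α i k)) (d (β k j)) +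
        LinearMap.lTensor A (LinearMap.mulRight ℂ (β k j)) (d (α i k)) := fun k => hder _ _
    simp only [h3, hdβ, Finset.sum_add_distrib] at h1
    have h4 : (∑ k, LinearMap.rTensor A (LinearMap.mulLeft ℂ (α i k))
        (-(if k = j then (1:A) ⊗ₜ[ℂ] (1:A) else 0))) = -(α i j ⊗ₜ[ℂ] (1:A)) := by
      rw [Finset.sum_eq_single j]
      · simp [LinearMap.rTensor_tmul]
      · intro k _ hk; simp [hk]
      · simp
    rw [h4] at h1
    linear_combination (norm := module) h1
  intro i l
  -- multiply key on the right by α and sum over j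
  have h5 : ∀ j, LinearMap.lTensor A (LinearMap.mulRight ℂ (α j l))
      (∑ k, LinearMap.lTensor A (LinearMap.mulRight ℂ (β k j)) (d (α i k)))
      = LinearMap.lTensor A (LinearMap.mulRight ℂ (α j l)) (α i j ⊗ₜ[ℂ] (1:A)) := by
    intro j; rw [key i j]
  have h6 : (∑ j, LinearMap.lTensor A (LinearMap.mulRight ℂ (α j l))
      (∑ k, LinearMap.lTensor A (LinearMap.mulRight ℂ (β k j)) (d (α i k))))
      = ∑ j, α i j ⊗ₜ[ℂ] α j l := by
    simp only [h5, LinearMap.lTensor_tmul, LinearMap.mulRight_apply, one_mul]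
  -- compute the LHS of h6 as d (α i l)
  have h7 : (∑ j, LinearMap.lTensor A (LinearMap.mulRight ℂ (α j l))
      (∑ k, LinearMap.lTensor A (LinearMap.mulRight ℂ (β k j)) (d (α i k))))
      = ∑ k, LinearMap.lTensor A (LinearMap.mulRight ℂ ((β * α) k l)) (d (α i k)) := by
    simp only [map_sum, Matrix.mul_apply, hsum]
    rw [Finset.sum_comm]
    refine Finset.sum_congr rfl fun k _ => Finset.sum_congr rfl fun j _ => ?_
    rw [LinearMap.mulRight_mul, LinearMap.lTensor_comp, LinearMap.comp_apply]
  have h8 : (∑ k, LinearMap.lTensor A (LinearMap.mulRight ℂ ((β * α) k l)) (d (α i k)))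
      = d (α i l) := by
    rw [hβα, Finset.sum_eq_single l]
    · simp [Matrix.one_apply, LinearMap.mulRight_one]
    · intro k _ hk
      simp [Matrix.one_apply, hk, show LinearMap.mulRight ℂ (0:A) = 0 from by ext a; simp,
        LinearMap.lTensor_zero]
    · simp
  rw [← h8, ← h7, h6]
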